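/- Let K be a field, R a finite dimensional commutative K-algebra, and Λ a finite dimensional K-algebra. If M is a Λ-module with End_Λ(M) local (i.e., M is indecomposable with local endomorphism ring), and K is algebraically closed, then End_{R⊗Λ}(R ⊗_K M) ≅ R ⊗_K End_Λ(M) is a local ring; hence R ⊗_K M is an indecomposable (R⊗_K Λ)-module. -/

import Mathlib

open TensorProduct CategoryTheory

attribute [local instance] RestrictScalars.moduleOrig

section TensorMod
variable (K R Λ : Type) [Field K] [Ring R] [Algebra K R] [Ring Λ] [Algebra K Λ]
variable (M : Type) [AddCommGroup M] [Module Λ M]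

/-- `R ⊗_K M`, where the `Λ`-module `M` is viewed as a `K`-module by restricting scalars. -/
abbrev TensorMod : Type := TensorProduct K R (RestrictScalars K Λ M)

/-- The action of `Λ` on the second factor of `R ⊗_K M`. -/
noncomputable def tensorModEndHom : Λ →+* Module.End K (TensorMod K R Λ M) where
  toFun a := (Module.toModuleEnd K (RestrictScalars K Λ M) a).lTensor R
  map_one' := by
    have h : Module.toModuleEnd K (RestrictScalars K Λ M) (1 : Λ) = LinearMap.id := by
      ext x; simp
    try dsimp only
    rw [h, LinearMap.lTensor_id]; rfl
  map_mul' a b := by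
    have h : Module.toModuleEnd K (RestrictScalars K Λ M) (a * b)
        = (Module.toModuleEnd K (RestrictScalars K Λ M) a) ∘ₗ
          (Module.toModuleEnd K (RestrictScalars K Λ M) b) := by
      ext x; simp [mul_smul]
    try dsimp only
    rw [h, LinearMap.lTensor_comp]; rfl
  map_zero' := by
    have h : Module.toModuleEnd K (RestrictScalars K Λ M) (0 : Λ) = 0 := by ext x; simp
    try dsimp only
    rw [h, LinearMap.lTensor_zero]
  map_add' a b := by
    have h : Module.toModuleEnd K (RestrictScalars K Λ M) (a + b)
        = Module.toModuleEnd K (RestrictScalars K Λ M) a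
          + Module.toModuleEnd K (RestrictScalars K Λ M) b := by
      ext x; simp [add_smul]
    try dsimp only
    rw [h, LinearMap.lTensor_add]

noncomputable instance tensorModModuleΛ : Module Λ (TensorMod K R Λ M) :=
  Module.compHom _ (tensorModEndHom K R Λ M)

lemma tensorMod_lambda_smul (a : Λ) (x : TensorMod K R Λ M) :
    a • x = (Module.toModuleEnd K (RestrictScalars K Λ M) a).lTensor R x := rfl

instance : IsScalarTower K Λ (TensorMod K R Λ M) := by
  constructor
  intro k a x
  rw [tensorMod_lambda_smul, tensorMod_lambda_smul]
  have h : Module.toModuleEnd K (RestrictScalars K Λ M) ((k • a : Λ))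
      = k • Module.toModuleEnd K (RestrictScalars K Λ M) a := by
    ext m
    show (k • a) • m = k • (a • m)
    rw [smul_assoc]
  rw [h, LinearMap.lTensor_smul]
  rfl

instance : SMulCommClass R Λ (TensorMod K R Λ M) := by
  constructor
  intro r a x
  induction x using TensorProduct.induction_on with
  | zero => simp
  | tmul s m =>
      rw [tensorMod_lambda_smul, TensorProduct.smul_tmul', LinearMap.lTensor_tmul,
        tensorMod_lambda_smul, LinearMap.lTensor_tmul, TensorProduct.smul_tmul']
  | add x y hx hy =>
      rw [smul_add, smul_add, hx, hy, ← smul_add, ← smul_add]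

noncomputable instance tensorModModule : Module (R ⊗[K] Λ) (TensorMod K R Λ M) :=
  TensorProduct.Algebra.module

end TensorMod

section TensorFunctor
variable (K R Λ : Type) [Field K] [Ring R] [Algebra K R] [Ring Λ] [Algebra K Λ]

/-- A `Λ`-linear map `f : M → N`, viewed as a `K`-linear map. -/
noncomputable def restrictMap {M N : Type} [AddCommGroup M] [Module Λ M]
    [AddCommGroup N] [Module Λ N] (f : M →ₗ[Λ] N) :
    RestrictScalars K Λ M →ₗ[K] RestrictScalars K Λ N where
  toFun m := f m
  map_add' x y := by exact map_add f x y
  map_smul' k x := by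
    show f ((algebraMap K Λ k) • _) = (algebraMap K Λ k) • f _
    exact map_smul f _ _

/-- The map `R ⊗ f : R ⊗ M → R ⊗ N` induced by a `Λ`-linear map `f`, as an
`(R ⊗[K] Λ)`-linear map. -/
noncomputable def tensorModMap {M N : Type} [AddCommGroup M] [Module Λ M]
    [AddCommGroup N] [Module Λ N] (f : M →ₗ[Λ] N) :
    TensorMod K R Λ M →ₗ[R ⊗[K] Λ] TensorMod K R Λ N where
  toFun := LinearMap.lTensor R (restrictMap K Λ f)
  map_add' x y := by simp
  map_smul' s x := by
    dsimp only [RingHom.id_apply]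
    induction s using TensorProduct.induction_on with
    | zero => rw [zero_smul, zero_smul, map_zero]
    | add s t hs ht => rw [add_smul, add_smul, map_add, hs, ht]
    | tmul r a =>
        rw [TensorProduct.Algebra.smul_def, TensorProduct.Algebra.smul_def]
        induction x using TensorProduct.induction_on with
        | zero => simp
        | add x y hx hy => rw [smul_add, smul_add, map_add, map_add, hx, hy, smul_add, smul_add]
        | tmul u m =>
            rw [tensorMod_lambda_smul, LinearMap.lTensor_tmul, TensorProduct.smul_tmul',
              LinearMap.lTensor_tmul, LinearMap.lTensor_tmul, tensorMod_lambda_smul,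
              LinearMap.lTensor_tmul, TensorProduct.smul_tmul']
            show (r • u) ⊗ₜ[K] (restrictMap K Λ f (a • m)) = (r • u) ⊗ₜ[K] (a • restrictMap K Λ f m)
            congr 1
            show f (a • m) = a • f m
            exact map_smul f _ _

lemma restrictMap_id {M : Type} [AddCommGroup M] [Module Λ M] :
    restrictMap K Λ (LinearMap.id : M →ₗ[Λ] M) = LinearMap.id := by
  ext x; rfl

lemma restrictMap_comp {M N P : Type} [AddCommGroup M] [Module Λ M] [AddCommGroup N]
    [Module Λ N] [AddCommGroup P] [Module Λ P] (f : M →ₗ[Λ] N) (g : N →ₗ[Λ] P) :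
    restrictMap K Λ (g ∘ₗ f) = restrictMap K Λ g ∘ₗ restrictMap K Λ f := by
  ext x; rfl

/-- The base change functor `- ⊗_K R : mod Λ → mod (R ⊗_K Λ)` (tensoring over `K` with
`R`). -/
noncomputable def tensorFunctor : ModuleCat.{0} Λ ⥤ ModuleCat.{0} (R ⊗[K] Λ) where
  obj M := ModuleCat.of _ (TensorMod K R Λ M)
  map {M N} f := ModuleCat.ofHom
    (tensorModMap K R Λ f.hom : TensorMod K R Λ M →ₗ[R ⊗[K] Λ] TensorMod K R Λ N)
  map_id M := by
    ext x
    show LinearMap.lTensor R (restrictMap K Λ (𝟙 M : M ⟶ M).hom) x = x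
    rw [show ((𝟙 M : M ⟶ M).hom : _ →ₗ[Λ] _) = LinearMap.id from rfl, restrictMap_id,
      LinearMap.lTensor_id]
    rfl
  map_comp {M N P} f g := by
    ext x
    show LinearMap.lTensor R (restrictMap K Λ (f ≫ g).hom) x = _
    rw [show ((f ≫ g : M ⟶ P).hom : _ →ₗ[Λ] _) = g.hom ∘ₗ f.hom from rfl,
      restrictMap_comp, LinearMap.lTensor_comp]
    rfl

noncomputable instance : (tensorFunctor K R Λ).Additive where
  map_add := by
    intro M N f g
    ext x
    show LinearMap.lTensor R (restrictMap K Λ (f + g).hom) x = _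
    have h : restrictMap K Λ (f + g).hom = restrictMap K Λ f.hom + restrictMap K Λ g.hom := by
      ext; rfl
    rw [h, LinearMap.lTensor_add]
    rfl
end TensorFunctor

section AuxLocal

theorem aux_isUnit_of_map {A B : Type*} [Ring A] [Ring B] (π : A →+* B)
    (hs : Function.Surjective π) (hnil : ∀ x : A, π x = 0 → IsNilpotent x)
    {a : A} (h : IsUnit (π a)) : IsUnit a := by
  obtain ⟨u, hu⟩ := h
  obtain ⟨c, hc⟩ := hs ((u⁻¹ : Bˣ) : B)
  have hab : IsUnit (a * c) := by
    have h0 : π (a * c - 1) = 0 := by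
      rw [map_sub, map_mul, map_one, ← hu, hc, Units.mul_inv, sub_self]
    have h1 := (hnil _ h0).isUnit_one_add
    have h2 : (1 : A) + (a * c - 1) = a * c := by abel
    rwa [h2] at h1
  have hba : IsUnit (c * a) := by
    have h0 : π (c * a - 1) = 0 := by
      rw [map_sub, map_mul, map_one, ← hu, hc, Units.inv_mul, sub_self]
    have h1 := (hnil _ h0).isUnit_one_add
    have h2 : (1 : A) + (c * a - 1) = c * a := by abel
    rwa [h2] at h1
  obtain ⟨v, hv⟩ := hab
  obtain ⟨w, hw⟩ := hba
  have hr : a * (c * (↑v⁻¹ : A)) = 1 := by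
    rw [← mul_assoc, ← hv, Units.mul_inv]
  have hl : ((↑w⁻¹ : A) * c) * a = 1 := by
    rw [mul_assoc, ← hw, Units.inv_mul]
  have hlr : (↑w⁻¹ : A) * c = c * (↑v⁻¹ : A) := by
    calc (↑w⁻¹ : A) * c = ((↑w⁻¹ : A) * c) * (a * (c * (↑v⁻¹ : A))) := by rw [hr, mul_one]
    _ = (((↑w⁻¹ : A) * c) * a) * (c * (↑v⁻¹ : A)) :=
      (mul_assoc ((↑w⁻¹ : A) * c) a (c * (↑v⁻¹ : A))).symm
    _ = c * (↑v⁻¹ : A) := by rw [hl, one_mul]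
  exact ⟨⟨a, c * (↑v⁻¹ : A), hr, by rw [← hlr, hl]⟩, rfl⟩

theorem aux_local_of_surjective {A B : Type*} [Ring A] [Ring B] (π : A →+* B)
    (hs : Function.Surjective π) (hnil : ∀ x : A, π x = 0 → IsNilpotent x)
    (hB : IsLocalRing B) : IsLocalRing A := by
  have hnt : Nontrivial A := π.domain_nontrivial
  refine ⟨fun {a b} hab => ?_⟩
  have h1 : π a + π b = 1 := by rw [← map_add, hab, map_one]
  rcases hB.isUnit_or_isUnit_of_add_one h1 with h | h
  · exact Or.inl (aux_isUnit_of_map π hs hnil h)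
  · exact Or.inr (aux_isUnit_of_map π hs hnil h)

theorem aux_idem {A : Type*} [Ring A] (hA : IsLocalRing A) {e : A} (he : e * e = e) :
    e = 0 ∨ e = 1 := by
  rcases hA.isUnit_or_isUnit_of_add_one (a := e) (b := 1 - e) (by abel) with h | h
  · right
    refine h.mul_left_cancel ?_
    rw [he, mul_one]
  · left
    refine h.mul_left_cancel ?_
    rw [sub_mul, one_mul, he, sub_self, mul_zero]

end AuxLocal

section AuxTensorLocal

variable (K : Type) [Field K] [IsAlgClosed K]
variable (R : Type) [CommRing R] [Algebra K R] [FiniteDimensional K R] [IsLocalRing R]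

theorem aux_exists_resHom :
    ∃ π : R →ₐ[K] K, ∀ r : R, (π r = 0 ↔ r ∈ IsLocalRing.maximalIdeal R) := by
  haveI : IsScalarTower K R (IsLocalRing.ResidueField R) :=
    IsScalarTower.of_algebraMap_eq' rfl
  have hfin : Module.Finite K (IsLocalRing.ResidueField R) :=
    Module.Finite.of_surjective
      (IsScalarTower.toAlgHom K R (IsLocalRing.ResidueField R)).toLinearMap
      Ideal.Quotient.mk_surjective
  have hint : Algebra.IsIntegral K (IsLocalRing.ResidueField R) :=
    Algebra.IsIntegral.of_finite K (IsLocalRing.ResidueField R)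
  have hbij : Function.Bijective (algebraMap K (IsLocalRing.ResidueField R)) :=
    ⟨(algebraMap K (IsLocalRing.ResidueField R)).injective,
      IsAlgClosed.algebraMap_bijective_of_isIntegral.2⟩
  let e : K ≃ₐ[K] IsLocalRing.ResidueField R :=
    AlgEquiv.ofBijective (Algebra.ofId K (IsLocalRing.ResidueField R)) hbij
  refine ⟨(e.symm.toAlgHom).comp (IsScalarTower.toAlgHom K R (IsLocalRing.ResidueField R)),
    fun r => ?_⟩
  have h1 : (e.symm.toAlgHom).comp (IsScalarTower.toAlgHom K R (IsLocalRing.ResidueField R)) r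
      = e.symm (algebraMap R (IsLocalRing.ResidueField R) r) := rfl
  rw [h1, map_eq_zero_iff _ e.symm.injective]
  have h2 : algebraMap R (IsLocalRing.ResidueField R) r
      = IsLocalRing.residue R r := rfl
  rw [h2, IsLocalRing.residue_eq_zero_iff]

variable (E : Type) [Ring E] [Algebra K E]

theorem aux_tensor_local (hE : IsLocalRing E) : IsLocalRing (R ⊗[K] E) := by
  obtain ⟨πR, hπR⟩ := aux_exists_resHom K R
  have hcomm : ∀ (r : R) (x : E),
      Commute (((Algebra.ofId K E).comp πR) r) ((AlgHom.id K E) x) := by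
    intro r x
    show algebraMap K E (πR r) * x = x * algebraMap K E (πR r)
    exact Algebra.commutes (πR r) x
  set π := Algebra.TensorProduct.lift ((Algebra.ofId K E).comp πR) (AlgHom.id K E) hcomm
    with hπdef
  have hπ_tmul : ∀ (r : R) (x : E), π (r ⊗ₜ[K] x) = algebraMap K E (πR r) * x := by
    intro r x
    rw [hπdef, Algebra.TensorProduct.lift_tmul]
    rfl
  have hsurj : Function.Surjective π := by
    intro x
    exact ⟨1 ⊗ₜ[K] x, by rw [hπ_tmul, map_one, map_one, one_mul]⟩
  haveI : IsArtinianRing R := IsArtinianRing.of_finite K R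
  obtain ⟨n, hn⟩ := IsArtinianRing.isNilpotent_jacobson_bot (R := R)
  rw [IsLocalRing.jacobson_eq_maximalIdeal ⊥ bot_ne_top] at hn
  set m := IsLocalRing.maximalIdeal R with hm
  set J : ℕ → Submodule K (R ⊗[K] E) := fun k =>
    Submodule.span K {z | ∃ r ∈ m ^ k, ∃ x : E, z = r ⊗ₜ[K] x} with hJ
  have h_mul : ∀ (k : ℕ) (x : R ⊗[K] E), x ∈ J 1 → ∀ y ∈ J k, x * y ∈ J (k + 1) := by
    intro k x hx
    induction hx using Submodule.span_induction with
    | mem z hz =>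
      intro y hy
      induction hy using Submodule.span_induction with
      | mem w hw =>
        obtain ⟨r, hr, a, rfl⟩ := hz
        obtain ⟨s, hs, b, rfl⟩ := hw
        rw [pow_one] at hr
        apply Submodule.subset_span
        refine ⟨r * s, ?_, a * b, ?_⟩
        · have := Ideal.mul_mem_mul hr hs
          rwa [← pow_succ'] at this
        · rw [Algebra.TensorProduct.tmul_mul_tmul]
      | zero => rw [mul_zero]; exact zero_mem _
      | add y₁ y₂ _ _ hy₁ hy₂ => rw [mul_add]; exact add_mem hy₁ hy₂
      | smul c y _ hy => rw [mul_smul_comm]; exact Submodule.smul_mem _ c hy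
    | zero => intro y hy; rw [zero_mul]; exact zero_mem _
    | add x₁ x₂ _ _ hx₁ hx₂ => intro y hy; rw [add_mul]; exact add_mem (hx₁ y hy) (hx₂ y hy)
    | smul c x _ hx => intro y hy; rw [smul_mul_assoc]; exact Submodule.smul_mem _ c (hx y hy)
  have h_pow : ∀ x ∈ J 1, ∀ k : ℕ, x ^ (k + 1) ∈ J (k + 1) := by
    intro x hx k
    induction k with
    | zero => rw [pow_one]; exact hx
    | succ k ih =>
      rw [pow_succ']
      exact h_mul (k + 1) x hx _ ih
  have h_ker : ∀ x : R ⊗[K] E, π x = 0 → x ∈ J 1 := by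
    have key : ∀ x : R ⊗[K] E, x - 1 ⊗ₜ[K] (π x) ∈ J 1 := by
      intro x
      induction x using TensorProduct.induction_on with
      | zero =>
        rw [map_zero, TensorProduct.tmul_zero, sub_zero]
        exact zero_mem _
      | tmul r a =>
        have h1 : (r ⊗ₜ[K] a : R ⊗[K] E) - 1 ⊗ₜ[K] (π (r ⊗ₜ[K] a))
            = (r - πR r • 1) ⊗ₜ[K] a := by
          rw [hπ_tmul, ← Algebra.smul_def, ← TensorProduct.smul_tmul,
            TensorProduct.sub_tmul]
        rw [h1]
        apply Submodule.subset_span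
        refine ⟨r - πR r • 1, ?_, a, rfl⟩
        rw [pow_one]
        rw [← hπR]
        rw [map_sub, map_smul, map_one, smul_eq_mul, mul_one, sub_self]
      | add x y hx hy =>
        have h2 : (x + y) - 1 ⊗ₜ[K] (π (x + y))
            = (x - 1 ⊗ₜ[K] (π x)) + (y - 1 ⊗ₜ[K] (π y)) := by
          rw [map_add, TensorProduct.tmul_add]; abel
        rw [h2]
        exact add_mem hx hy
    intro x hx
    have := key x
    rwa [hx, TensorProduct.tmul_zero, sub_zero] at this
  have h_nil : ∀ x : R ⊗[K] E, π x = 0 → IsNilpotent x := by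
    intro x hx
    refine ⟨n + 1, ?_⟩
    have hmem := h_pow x (h_ker x hx) n
    have hJn : J (n + 1) = ⊥ := by
      rw [hJ]
      rw [eq_bot_iff]
      rw [Submodule.span_le]
      rintro z ⟨r, hr, a, rfl⟩
      have hr0 : r ∈ m ^ n := Ideal.pow_le_pow_right (Nat.le_succ n) hr
      rw [hn] at hr0
      have hr1 : r = 0 := by simpa using hr0
      rw [hr1, TensorProduct.zero_tmul]
      exact Submodule.zero_mem ⊥
    rw [hJn] at hmem
    exact (Submodule.mem_bot K).mp hmem
  exact aux_local_of_surjective π.toRingHom hsurj h_nil hE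

end AuxTensorLocal

section AuxPsi

variable (K R Λ : Type) [Field K] [CommRing R] [Algebra K R] [Ring Λ] [Algebra K Λ]
variable (M : Type) [AddCommGroup M] [Module Λ M]

lemma aux_ksmul_one_smul (k : K) (x : TensorMod K R Λ M) : (k • (1 : R)) • x = k • x := by
  rw [smul_assoc, one_smul]

lemma aux_lambda_smul_tmul (a : Λ) (r : R) (m : RestrictScalars K Λ M) :
    a • (r ⊗ₜ[K] m : TensorMod K R Λ M) = r ⊗ₜ[K] (a • m) := by
  rw [tensorMod_lambda_smul, LinearMap.lTensor_tmul]
  rfl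

lemma aux_ksmul_def (k : K) (m : RestrictScalars K Λ M) :
    k • m = (algebraMap K Λ k) • m := rfl

lemma aux_lambda_ksmul (a : Λ) (k : K) (m : RestrictScalars K Λ M) :
    a • (k • m) = k • (a • m) := by
  rw [aux_ksmul_def K Λ M k m, aux_ksmul_def K Λ M k (a • m), ← mul_smul, ← Algebra.commutes,
    mul_smul]

lemma aux_lambda_ksmul_X (a : Λ) (k : K) (x : TensorMod K R Λ M) :
    a • (k • x) = k • (a • x) := by
  rw [tensorMod_lambda_smul, tensorMod_lambda_smul, map_smul]

instance aux_smulCommClass :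
    SMulCommClass (R ⊗[K] Λ) K (TensorMod K R Λ M) := by
  constructor
  intro t k x
  induction t using TensorProduct.induction_on with
  | zero => rw [zero_smul, zero_smul, smul_zero]
  | add a b ha hb => rw [add_smul, add_smul, smul_add, ha, hb]
  | tmul s a =>
    rw [TensorProduct.Algebra.smul_def, TensorProduct.Algebra.smul_def,
      aux_lambda_ksmul_X, smul_comm s k]

instance aux_isScalarTower :
    IsScalarTower K (R ⊗[K] Λ) (TensorMod K R Λ M) := by
  constructor
  intro k t x
  induction t using TensorProduct.induction_on with
  | zero => rw [smul_zero, zero_smul, smul_zero]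
  | add a b ha hb => rw [smul_add, add_smul, add_smul, smul_add, ha, hb]
  | tmul s a =>
    have h1 : k • (s ⊗ₜ[K] a : R ⊗[K] Λ) = (k • s) ⊗ₜ[K] a := TensorProduct.smul_tmul' k s a
    rw [h1, TensorProduct.Algebra.smul_def, TensorProduct.Algebra.smul_def, smul_assoc]

/-- Left multiplication by `r : R` on `R ⊗ M` as an `(R ⊗ Λ)`-linear endomorphism. -/
noncomputable def auxRho (r : R) :
    TensorMod K R Λ M →ₗ[R ⊗[K] Λ] TensorMod K R Λ M where
  toFun x := r • x
  map_add' x y := smul_add r x y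
  map_smul' t x := by
    dsimp only [RingHom.id_apply]
    induction t using TensorProduct.induction_on with
    | zero => rw [zero_smul, zero_smul, smul_zero]
    | add s u hs hu => rw [add_smul, add_smul, smul_add, hs, hu]
    | tmul s a =>
      rw [TensorProduct.Algebra.smul_def, TensorProduct.Algebra.smul_def,
        smul_smul, mul_comm r s, ← smul_smul, smul_comm r a]

noncomputable def auxRhoAlg : R →ₐ[K] Module.End (R ⊗[K] Λ) (TensorMod K R Λ M) where
  toFun := auxRho K R Λ M
  map_one' := LinearMap.ext fun x => one_smul R x
  map_mul' r s := LinearMap.ext fun x =>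
    show (r * s) • x = r • (s • x) from mul_smul r s x
  map_zero' := LinearMap.ext fun x => zero_smul R x
  map_add' r s := LinearMap.ext fun x => add_smul r s x
  commutes' k := LinearMap.ext fun x => by
    show (algebraMap K R k) • x = (algebraMap K (Module.End (R ⊗[K] Λ) (TensorMod K R Λ M)) k) x
    rw [Module.algebraMap_end_apply, Algebra.algebraMap_eq_smul_one]
    exact aux_ksmul_one_smul K R Λ M k x

lemma auxRhoAlg_apply (r : R) (x : TensorMod K R Λ M) : auxRhoAlg K R Λ M r x = r • x := rfl

/-- `1 ⊗ f` as an `(R ⊗ Λ)`-linear endomorphism of `R ⊗ M`. -/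
noncomputable def auxEta (f : Module.End Λ (RestrictScalars K Λ M)) :
    TensorMod K R Λ M →ₗ[R ⊗[K] Λ] TensorMod K R Λ M :=
  tensorModMap K R Λ (show M →ₗ[Λ] M from f)

lemma auxEta_tmul (f : Module.End Λ (RestrictScalars K Λ M)) (r : R)
    (m : RestrictScalars K Λ M) :
    auxEta K R Λ M f (r ⊗ₜ[K] m) = r ⊗ₜ[K] (f m) := rfl

lemma auxEndExt {g h : TensorMod K R Λ M →ₗ[R ⊗[K] Λ] TensorMod K R Λ M}
    (H : ∀ (r : R) (m : RestrictScalars K Λ M), g (r ⊗ₜ[K] m) = h (r ⊗ₜ[K] m)) : g = h :=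
  LinearMap.ext fun x => by
    induction x using TensorProduct.induction_on with
    | zero => rw [map_zero, map_zero]
    | tmul r m => exact H r m
    | add a b ha hb => rw [map_add, map_add, ha, hb]

noncomputable def auxEtaAlg :
    Module.End Λ (RestrictScalars K Λ M) →ₐ[K] Module.End (R ⊗[K] Λ) (TensorMod K R Λ M) where
  toFun := auxEta K R Λ M
  map_one' := auxEndExt K R Λ M fun r m => by
    rw [auxEta_tmul]
    rfl
  map_mul' f g := auxEndExt K R Λ M fun r m => by
    show auxEta K R Λ M (f * g) (r ⊗ₜ[K] m)
      = auxEta K R Λ M f (auxEta K R Λ M g (r ⊗ₜ[K] m))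
    rw [auxEta_tmul, auxEta_tmul, auxEta_tmul]
    rfl
  map_zero' := auxEndExt K R Λ M fun r m => by
    rw [auxEta_tmul]
    show r ⊗ₜ[K] (0 : RestrictScalars K Λ M) = 0
    rw [TensorProduct.tmul_zero]
  map_add' f g := auxEndExt K R Λ M fun r m => by
    show auxEta K R Λ M (f + g) (r ⊗ₜ[K] m)
      = auxEta K R Λ M f (r ⊗ₜ[K] m) + auxEta K R Λ M g (r ⊗ₜ[K] m)
    rw [auxEta_tmul, auxEta_tmul, auxEta_tmul]
    show r ⊗ₜ[K] (f m + g m) = _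
    rw [TensorProduct.tmul_add]
  commutes' k := auxEndExt K R Λ M fun r m => by
    rw [auxEta_tmul]
    show r ⊗ₜ[K] ((algebraMap K (Module.End Λ (RestrictScalars K Λ M)) k) m)
      = (algebraMap K (Module.End (R ⊗[K] Λ) (TensorMod K R Λ M)) k) (r ⊗ₜ[K] m)
    rw [Module.algebraMap_end_apply, Module.algebraMap_end_apply, TensorProduct.tmul_smul]

lemma aux_commute (r : R) (f : Module.End Λ (RestrictScalars K Λ M)) :
    Commute (auxRhoAlg K R Λ M r) (auxEtaAlg K R Λ M f) := by
  show auxRhoAlg K R Λ M r * auxEtaAlg K R Λ M f = auxEtaAlg K R Λ M f * auxRhoAlg K R Λ M r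
  apply auxEndExt
  intro s m
  show auxRhoAlg K R Λ M r (auxEta K R Λ M f (s ⊗ₜ[K] m))
    = auxEta K R Λ M f (auxRhoAlg K R Λ M r (s ⊗ₜ[K] m))
  rw [auxEta_tmul, auxRhoAlg_apply, auxRhoAlg_apply, TensorProduct.smul_tmul',
    TensorProduct.smul_tmul', auxEta_tmul]

/-- The canonical algebra map `R ⊗ End_Λ(M) → End_{R⊗Λ}(R ⊗ M)`. -/
noncomputable def auxPsi :
    R ⊗[K] Module.End Λ (RestrictScalars K Λ M) →ₐ[K]
      Module.End (R ⊗[K] Λ) (TensorMod K R Λ M) :=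
  Algebra.TensorProduct.lift (auxRhoAlg K R Λ M) (auxEtaAlg K R Λ M) (aux_commute K R Λ M)

lemma auxPsi_tmul (r : R) (f : Module.End Λ (RestrictScalars K Λ M)) (s : R)
    (m : RestrictScalars K Λ M) :
    auxPsi K R Λ M (r ⊗ₜ[K] f) (s ⊗ₜ[K] m) = (r * s) ⊗ₜ[K] (f m) := by
  rw [auxPsi, Algebra.TensorProduct.lift_tmul]
  show auxRhoAlg K R Λ M r (auxEta K R Λ M f (s ⊗ₜ[K] m)) = _
  rw [auxEta_tmul, auxRhoAlg_apply, TensorProduct.smul_tmul', smul_eq_mul]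

variable [FiniteDimensional K R]

/-- `R ⊗ M ≃ (ι →₀ M)` via a basis of `R`. -/
noncomputable def auxThetaM :
    TensorMod K R Λ M ≃ₗ[K] (Fin (Module.finrank K R) →₀ RestrictScalars K Λ M) :=
  (TensorProduct.congr (Module.finBasis K R).repr
    (LinearEquiv.refl K (RestrictScalars K Λ M))) ≪≫ₗ
    TensorProduct.finsuppScalarLeft K (RestrictScalars K Λ M) (Fin (Module.finrank K R))

/-- `R ⊗ End_Λ(M) ≃ (ι →₀ End_Λ(M))` via a basis of `R`. -/
noncomputable def auxThetaE :
    R ⊗[K] Module.End Λ (RestrictScalars K Λ M) ≃ₗ[K]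
      (Fin (Module.finrank K R) →₀ Module.End Λ (RestrictScalars K Λ M)) :=
  (TensorProduct.congr (Module.finBasis K R).repr
    (LinearEquiv.refl K (Module.End Λ (RestrictScalars K Λ M)))) ≪≫ₗ
    TensorProduct.finsuppScalarLeft K (Module.End Λ (RestrictScalars K Λ M))
      (Fin (Module.finrank K R))

lemma auxThetaM_tmul (r : R) (m : RestrictScalars K Λ M) (i : Fin (Module.finrank K R)) :
    auxThetaM K R Λ M (r ⊗ₜ[K] m) i = (Module.finBasis K R).repr r i • m := by
  rw [auxThetaM, LinearEquiv.trans_apply, TensorProduct.congr_tmul,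
    TensorProduct.finsuppScalarLeft_apply_tmul_apply]
  rfl

lemma auxThetaE_tmul (r : R) (f : Module.End Λ (RestrictScalars K Λ M))
    (i : Fin (Module.finrank K R)) :
    auxThetaE K R Λ M (r ⊗ₜ[K] f) i = (Module.finBasis K R).repr r i • f := by
  rw [auxThetaE, LinearEquiv.trans_apply, TensorProduct.congr_tmul,
    TensorProduct.finsuppScalarLeft_apply_tmul_apply]
  rfl

lemma auxThetaM_symm_single (i : Fin (Module.finrank K R)) (m : RestrictScalars K Λ M) :
    (auxThetaM K R Λ M).symm (Finsupp.single i m) = (Module.finBasis K R) i ⊗ₜ[K] m := by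
  rw [auxThetaM, LinearEquiv.symm_trans_apply,
    TensorProduct.finsuppScalarLeft_symm_apply_single, TensorProduct.congr_symm_tmul,
    Module.Basis.repr_symm_single_one]
  rfl

lemma auxThetaM_lambda (a : Λ) (x : TensorMod K R Λ M) (i : Fin (Module.finrank K R)) :
    auxThetaM K R Λ M (a • x) i = a • (auxThetaM K R Λ M x i) := by
  induction x using TensorProduct.induction_on with
  | zero => rw [smul_zero, map_zero]; simp
  | tmul r m =>
    rw [aux_lambda_smul_tmul, auxThetaM_tmul, auxThetaM_tmul, aux_lambda_ksmul]
  | add x y hx hy =>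
    rw [smul_add, map_add, map_add, Finsupp.add_apply, Finsupp.add_apply, hx, hy, smul_add]

lemma auxKey (t : R ⊗[K] Module.End Λ (RestrictScalars K Λ M)) (m : RestrictScalars K Λ M)
    (i : Fin (Module.finrank K R)) :
    auxThetaM K R Λ M (auxPsi K R Λ M t ((1 : R) ⊗ₜ[K] m)) i
      = (auxThetaE K R Λ M t i) m := by
  induction t using TensorProduct.induction_on with
  | zero => simp
  | tmul r f =>
    rw [auxPsi_tmul, mul_one, auxThetaM_tmul, auxThetaE_tmul, LinearMap.smul_apply]
  | add x y hx hy =>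
    rw [map_add, LinearMap.add_apply, map_add, Finsupp.add_apply, map_add, Finsupp.add_apply,
      LinearMap.add_apply, hx, hy]

lemma aux_one_lambda_smul (a : Λ) (y : TensorMod K R Λ M) :
    ((1 : R) ⊗ₜ[K] a : R ⊗[K] Λ) • y = a • y := by
  rw [TensorProduct.Algebra.smul_def, one_smul]

lemma auxPsi_bijective : Function.Bijective (auxPsi K R Λ M) := by
  constructor
  · rw [injective_iff_map_eq_zero]
    intro t ht
    have h0 : auxThetaE K R Λ M t = 0 := by
      apply Finsupp.ext
      intro i
      apply LinearMap.ext
      intro m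
      have h1 := auxKey K R Λ M t m i
      rw [ht] at h1
      simpa using h1.symm
    have h2 := congrArg (auxThetaE K R Λ M).symm h0
    rwa [LinearEquiv.symm_apply_apply, map_zero] at h2
  · intro g
    classical
    set b := Module.finBasis K R with hb
    let F : Fin (Module.finrank K R) → Module.End Λ (RestrictScalars K Λ M) := fun i =>
      { toFun := fun m => auxThetaM K R Λ M (g ((1 : R) ⊗ₜ[K] m)) i
        map_add' := fun m m' => by
          rw [TensorProduct.tmul_add, map_add, map_add, Finsupp.add_apply]
        map_smul' := fun a m => by
          dsimp only [RingHom.id_apply]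
          have h1 : ((1 : R) ⊗ₜ[K] (a • m) : TensorMod K R Λ M)
              = a • ((1 : R) ⊗ₜ[K] m) := (aux_lambda_smul_tmul K R Λ M a 1 m).symm
          have h2 : g (a • ((1 : R) ⊗ₜ[K] m)) = a • g ((1 : R) ⊗ₜ[K] m) := by
            rw [← aux_one_lambda_smul, map_smul, aux_one_lambda_smul]
          rw [h1, h2, auxThetaM_lambda] }
    refine ⟨∑ i, b i ⊗ₜ[K] F i, ?_⟩
    apply auxEndExt
    intro s m
    have hL : auxPsi K R Λ M (∑ i, b i ⊗ₜ[K] F i) (s ⊗ₜ[K] m)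
        = ∑ i, (b i * s) ⊗ₜ[K] (F i m) := by
      rw [map_sum, LinearMap.sum_apply]
      exact Finset.sum_congr rfl fun i _ => auxPsi_tmul K R Λ M (b i) (F i) s m
    have hd : g ((1 : R) ⊗ₜ[K] m) = ∑ i, b i ⊗ₜ[K] (F i m) := by
      conv_lhs => rw [← (auxThetaM K R Λ M).symm_apply_apply (g ((1 : R) ⊗ₜ[K] m)),
        ← Finsupp.univ_sum_single (auxThetaM K R Λ M (g ((1 : R) ⊗ₜ[K] m)))]
      rw [map_sum]
      exact Finset.sum_congr rfl fun i _ => auxThetaM_symm_single K R Λ M i _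
    have hsm : (s ⊗ₜ[K] m : TensorMod K R Λ M)
        = ((s ⊗ₜ[K] (1 : Λ)) : R ⊗[K] Λ) • ((1 : R) ⊗ₜ[K] m) := by
      rw [TensorProduct.Algebra.smul_def, one_smul, TensorProduct.smul_tmul', smul_eq_mul,
        mul_one]
    have hg : g (s ⊗ₜ[K] m) = ∑ i, (s * b i) ⊗ₜ[K] (F i m) := by
      rw [hsm, map_smul, hd, Finset.smul_sum]
      refine Finset.sum_congr rfl fun i _ => ?_
      rw [TensorProduct.Algebra.smul_def, one_smul, TensorProduct.smul_tmul', smul_eq_mul]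
    rw [hL, hg]
    exact Finset.sum_congr rfl fun i _ => by rw [mul_comm]

end AuxPsi

section S17
variable (K R Λ : Type) [Field K] [IsAlgClosed K]
  [CommRing R] [Algebra K R] [FiniteDimensional K R] [IsLocalRing R]
  [Ring Λ] [Algebra K Λ] [FiniteDimensional K Λ]

/-- If `M` is an indecomposable `Λ`-module (i.e. `End_Λ(M)` is local) and `K` is
algebraically closed, then `End_{R⊗Λ}(R ⊗_K M) ≅ R ⊗_K End_Λ(M)` is a local ring; in
particular `R ⊗_K M` is an indecomposable `(R ⊗_K Λ)`-module. -/
theorem end_tensor_local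
    (M : Type) [AddCommGroup M] [Module Λ M] [Module.Finite Λ M]
    (hM : IsLocalRing (Module.End Λ M)) :
    Nonempty (Module.End (R ⊗[K] Λ) (TensorMod K R Λ M) ≃+* R ⊗[K] Module.End Λ (RestrictScalars K Λ M)) ∧
    IsLocalRing (R ⊗[K] Module.End Λ (RestrictScalars K Λ M)) ∧
    IsLocalRing (Module.End (R ⊗[K] Λ) (TensorMod K R Λ M)) ∧
    (∀ e : Module.End (R ⊗[K] Λ) (TensorMod K R Λ M),
      e ∘ₗ e = e → e = 0 ∨ e = 1) := by
  have hE : IsLocalRing (Module.End Λ (RestrictScalars K Λ M)) := hM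
  letI : Ring (Module.End Λ (RestrictScalars K Λ M)) :=
    @Module.End.instRing Λ (RestrictScalars K Λ M) _ _ (RestrictScalars.moduleOrig K Λ M)
  letI : Ring (Module.End (R ⊗[K] Λ) (TensorMod K R Λ M)) :=
    @Module.End.instRing (R ⊗[K] Λ) (TensorMod K R Λ M) _ _ (tensorModModule K R Λ M)
  have hloc1 : IsLocalRing (R ⊗[K] Module.End Λ (RestrictScalars K Λ M)) :=
    @aux_tensor_local K _ _ R _ _ _ _ (Module.End Λ (RestrictScalars K Λ M)) _
      (Module.End.instAlgebra K Λ (RestrictScalars K Λ M)) hE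
  have hbij := auxPsi_bijective K R Λ M
  let eqv : (R ⊗[K] Module.End Λ (RestrictScalars K Λ M)) ≃ₐ[K]
      Module.End (R ⊗[K] Λ) (TensorMod K R Λ M) :=
    AlgEquiv.ofBijective (auxPsi K R Λ M) hbij
  have hloc2 : IsLocalRing (Module.End (R ⊗[K] Λ) (TensorMod K R Λ M)) := by
    refine aux_local_of_surjective eqv.symm.toRingEquiv.toRingHom eqv.symm.surjective
      (fun x hx => ⟨1, ?_⟩) hloc1
    rw [pow_one]
    exact eqv.symm.injective (by simpa using hx)
  refine ⟨⟨eqv.symm.toRingEquiv⟩, hloc1, hloc2, fun e he => ?_⟩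
  exact aux_idem hloc2 (show e * e = e from he)


end S17
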